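/- Fix ε ∈ (0,1/2) and K > 0. There is a constant C = C(ε, K) such that the following holds for all T ≥ 2, all M with T^ε ≤ M ≤ T^{1−ε}, every real N ≥ 1, and every real-valued sequence (a_n) supported on the integers n with N < n ≤ 2N. Define P_♮ = Re Σ_{c,q ≥ 1, cq ≤ K·N/T} Σ_{N < m ≤ 2N} Σ_{N < n ≤ 2N} a_m · a_n · V_q(m,n;c)/(cq) · I(πm/(cq), πn/(cq)). Then |P_♮| ≤ C · MT · Σ_{1 ≤ q ≤ K·N/T} (1/q) ∫_{−2M^ε/M}^{2M^ε/M} Σ_{1 ≤ c ≤ K·N/(Tq)} (1/c) Σ_{α mod c, gcd(α,c)=1} |Σ_{N < n ≤ 2N} a_n e(αn/c) e(nt/(cq))|² dt. -/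

import Mathlib

open scoped Classical
open MeasureTheory

/-- `e(x) = exp(2πix)`. -/
noncomputable def e (x : ℝ) : ℂ := Complex.exp (2 * Real.pi * Complex.I * x)

/-- `V_q(m,n;c) = ∑_{α mod c, (α(q-α),c)=1} e((α* m + (q-α)* n)/c)`. -/
noncomputable def Vsum (q m n : ℤ) (c : ℕ) : ℂ :=
  ∑ α ∈ Finset.range c,
    if IsUnit ((α : ZMod c)) ∧ IsUnit ((q : ZMod c) - (α : ZMod c)) then
      e (((((α : ZMod c)⁻¹).val : ℝ) * (m : ℝ)
          + ((((q : ZMod c) - (α : ZMod c))⁻¹).val : ℝ) * (n : ℝ)) / c)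
    else 0

/-- `β(r) = exp(-r²)`. -/
noncomputable def βfun (r : ℝ) : ℝ := Real.exp (-r ^ 2)

/-- `ρ₊(r) = sinh r + cosh r - 1`. -/
noncomputable def ρp (r : ℝ) : ℝ := Real.sinh r + Real.cosh r - 1

/-- `ρ₋(r) = sinh r - cosh r + 1`. -/
noncomputable def ρm (r : ℝ) : ℝ := Real.sinh r - Real.cosh r + 1

/-- `g(r) = (2/(π√π)) (2β(Mr) cos(2Tr) + (M/T) β'(Mr) sin(2Tr))`. -/
noncomputable def gfun (T M r : ℝ) : ℝ :=
  (2 / (Real.pi * Real.sqrt Real.pi)) *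
    (2 * βfun (M * r) * Real.cos (2 * T * r)
      + (M / T) * deriv βfun (M * r) * Real.sin (2 * T * r))

/-- `I(v,w) = MT ∫_{-M^ε/M}^{M^ε/M} g(r) exp(2i(v ρ₊(r) - w ρ₋(r))) dr`. -/
noncomputable def Iker (ε T M v w : ℝ) : ℂ :=
  (M : ℂ) * (T : ℂ) *
    ∫ r in (-(M ^ ε / M))..(M ^ ε / M),
      (gfun T M r : ℂ) * Complex.exp (2 * Complex.I * (v * ρp r - w * ρm r))

/-! ### auxiliary -/

noncomputable def Af (a : ℕ → ℝ) (N1 N2 c q β : ℕ) (t : ℝ) : ℂ :=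
  ∑ n ∈ Finset.Ioc N1 N2, (a n : ℂ) * e ((β : ℝ) * n / c) * e ((n : ℝ) * t / (c * q))

noncomputable def Hf (a : ℕ → ℝ) (N1 N2 c q : ℕ) (t : ℝ) : ℝ :=
  ∑ β ∈ Finset.range c, if IsUnit (β : ZMod c) then ‖Af a N1 N2 c q β t‖ ^ 2 else 0

lemma hasDerivAt_βfun (x : ℝ) : HasDerivAt βfun (Real.exp (-x ^ 2) * (-(2 * x))) x := by
  have h1 : HasDerivAt (fun r : ℝ => -r ^ 2) (-(2 * x)) x := by
    simpa using (show HasDerivAt (fun r : ℝ => -r ^ 2) _ x from (hasDerivAt_pow 2 x).neg)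
  show HasDerivAt (fun r : ℝ => Real.exp (-r ^ 2)) (Real.exp (-x ^ 2) * (-(2 * x))) x
  simpa [βfun] using h1.exp

lemma deriv_βfun (x : ℝ) : deriv βfun x = Real.exp (-x ^ 2) * (-(2 * x)) :=
  (hasDerivAt_βfun x).deriv

lemma abs_deriv_βfun_le (x : ℝ) : |deriv βfun x| ≤ 1 := by
  rw [deriv_βfun]
  have h1 : (0:ℝ) < 1 + x ^ 2 := by positivity
  have h2 : Real.exp (-x ^ 2) ≤ 1 / (1 + x ^ 2) := by
    rw [Real.exp_neg, inv_eq_one_div]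
    exact one_div_le_one_div_of_le h1 (by nlinarith [Real.add_one_le_exp (x ^ 2)])
  have h3 : |Real.exp (-x ^ 2) * (-(2 * x))| = Real.exp (-x ^ 2) * (2 * |x|) := by
    rw [abs_mul, abs_of_pos (Real.exp_pos _), abs_neg, abs_mul]
    simp [abs_of_nonneg]
  rw [h3]
  have h4 : 2 * |x| ≤ 1 + x ^ 2 := by nlinarith [sq_abs x, sq_nonneg (|x| - 1)]
  calc Real.exp (-x ^ 2) * (2 * |x|) ≤ (1 / (1 + x ^ 2)) * (1 + x ^ 2) := by
        apply mul_le_mul h2 h4 (by positivity) (by positivity)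
    _ = 1 := by field_simp

lemma continuous_deriv_βfun : Continuous (deriv βfun) := by
  have : deriv βfun = fun x => Real.exp (-x ^ 2) * (-(2 * x)) := funext deriv_βfun
  rw [this]; continuity

lemma continuous_gfun (T M : ℝ) : Continuous (gfun T M) := by
  unfold gfun βfun
  exact continuous_const.mul (((continuous_const.mul ((Real.continuous_exp.comp (by continuity)))).mul (Real.continuous_cos.comp (by continuity))).add (((continuous_const.mul (continuous_deriv_βfun.comp (continuous_const.mul continuous_id))).mul (Real.continuous_sin.comp (by continuity)))))

lemma abs_gfun_le (T M : ℝ) (hT : 0 < T) (hM : 0 ≤ M) (hMT : M ≤ T) (r : ℝ) :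
    |gfun T M r| ≤ 2 := by
  have hβ : |βfun (M * r)| ≤ 1 := by
    rw [βfun, abs_of_pos (Real.exp_pos _)]
    exact Real.exp_le_one_iff.mpr (neg_nonpos.mpr (by positivity))
  have hβ' : |deriv βfun (M * r)| ≤ 1 := abs_deriv_βfun_le _
  have hq : M / T ≤ 1 := div_le_one_of_le₀ hMT hT.le
  have hq0 : 0 ≤ M / T := by positivity
  have hpi : (3:ℝ) ≤ Real.pi * Real.sqrt Real.pi := by
    have h1 : (3:ℝ) ≤ Real.pi := Real.pi_gt_three.le
    have h2 : (1:ℝ) ≤ Real.sqrt Real.pi := by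
      rw [show (1:ℝ) = Real.sqrt 1 by simp]
      exact Real.sqrt_le_sqrt (by linarith)
    nlinarith
  have hfrac : (2 / (Real.pi * Real.sqrt Real.pi)) ≤ 2/3 :=
    div_le_div_of_nonneg_left (by norm_num) (by norm_num) hpi
  have hfrac0 : (0:ℝ) ≤ 2 / (Real.pi * Real.sqrt Real.pi) := by positivity
  have hc := Real.abs_cos_le_one (2 * T * r)
  have hs := Real.abs_sin_le_one (2 * T * r)
  have e1 : |2 * βfun (M * r) * Real.cos (2 * T * r)| ≤ 2 := by
    rw [abs_mul, abs_mul, abs_two]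
    nlinarith [abs_nonneg (βfun (M * r)), abs_nonneg (Real.cos (2 * T * r))]
  have e2 : |(M / T) * deriv βfun (M * r) * Real.sin (2 * T * r)| ≤ 1 := by
    rw [abs_mul, abs_mul, abs_of_nonneg hq0]
    calc M / T * |deriv βfun (M * r)| * |Real.sin (2 * T * r)| ≤ 1 * 1 * 1 := by
          gcongr <;> first | positivity | assumption
      _ = 1 := by norm_num
  have hinner : |2 * βfun (M * r) * Real.cos (2 * T * r)
      + (M / T) * deriv βfun (M * r) * Real.sin (2 * T * r)| ≤ 3 :=
    (abs_add_le _ _).trans (by linarith)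
  rw [gfun, abs_mul, abs_of_nonneg hfrac0]
  have h0 := abs_nonneg (2 * βfun (M * r) * Real.cos (2 * T * r)
      + (M / T) * deriv βfun (M * r) * Real.sin (2 * T * r))
  nlinarith


lemma e_add (x y : ℝ) : e (x + y) = e x * e y := by
  rw [e, e, e, ← Complex.exp_add]
  congr 1
  push_cast
  ring

lemma continuous_e : Continuous e := by
  unfold e
  exact Complex.continuous_exp.comp (continuous_const.mul Complex.continuous_ofReal)

lemma continuous_Af (a : ℕ → ℝ) (N1 N2 c q β : ℕ) :
    Continuous (Af a N1 N2 c q β) := by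
  unfold Af
  refine continuous_finset_sum _ fun n _ => ?_
  refine (continuous_const.mul ?_)
  exact continuous_e.comp (by fun_prop)

lemma continuous_Hf (a : ℕ → ℝ) (N1 N2 c q : ℕ) : Continuous (Hf a N1 N2 c q) := by
  unfold Hf
  refine continuous_finset_sum _ fun β _ => ?_
  by_cases h : IsUnit ((β : ZMod c))
  · simpa [h] using (show Continuous fun t => ‖Af a N1 N2 c q β t‖ ^ 2 from (continuous_Af a N1 N2 c q β).norm.pow 2)
  · simpa [h] using (continuous_const : Continuous fun _ : ℝ => (0:ℝ))

lemma Hf_nonneg (a : ℕ → ℝ) (N1 N2 c q : ℕ) (t : ℝ) : 0 ≤ Hf a N1 N2 c q t := by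
  refine Finset.sum_nonneg fun β _ => ?_
  split <;> positivity

lemma exp_chord {x : ℝ} (h0 : 0 ≤ x) (h1 : x ≤ 1) : Real.exp x ≤ 1 + 2 * x := by
  have hcv := convexOn_exp.2 (Set.mem_univ (0:ℝ)) (Set.mem_univ (1:ℝ))
    (by linarith : (0:ℝ) ≤ 1 - x) h0 (by ring)
  simp only [smul_eq_mul, mul_zero, mul_one, zero_add, Real.exp_zero] at hcv
  have he : Real.exp 1 ≤ 3 := by
    have := Real.exp_one_lt_d9
    linarith
  nlinarith

/-- reindexing over inverses of units -/
lemma sum_reindex_le (c : ℕ) (hc : c ≠ 0) (P : ℕ → Prop) (φ : ℕ → ZMod c)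
    (hinj : ∀ α ∈ Finset.range c, ∀ α' ∈ Finset.range c, P α → P α' → φ α = φ α' → α = α')
    (hunit : ∀ α ∈ Finset.range c, P α → IsUnit (φ α))
    (F : ℕ → ℝ) (hF : ∀ β, 0 ≤ F β) :
    (∑ α ∈ Finset.range c, if P α then F ((φ α).val) else 0)
      ≤ ∑ β ∈ Finset.range c, if IsUnit ((β : ZMod c)) then F β else 0 := by
  haveI : NeZero c := ⟨hc⟩
  letI : DecidablePred P := fun _ => Classical.propDecidable _
  letI : ∀ β : ℕ, Decidable (IsUnit ((β : ZMod c))) := fun _ => Classical.propDecidable _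
  set s := (Finset.range c).filter P with hs
  have hL : (∑ α ∈ Finset.range c, if P α then F ((φ α).val) else 0)
      = ∑ α ∈ s, F ((φ α).val) := (Finset.sum_filter _ _).symm
  rw [hL]
  have hmem : ∀ β ∈ s.image (fun α => (φ α).val),
      β ∈ Finset.range c ∧ IsUnit ((β : ZMod c)) := by
    intro β hβ
    simp only [Finset.mem_image] at hβ
    obtain ⟨α, hα, rfl⟩ := hβ
    rw [hs, Finset.mem_filter] at hα
    refine ⟨Finset.mem_range.mpr (ZMod.val_lt _), ?_⟩
    rw [ZMod.natCast_val, ZMod.cast_id]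
    exact hunit α hα.1 hα.2
  have e1 : (∑ α ∈ s, F ((φ α).val))
      = ∑ β ∈ s.image (fun α => (φ α).val), F β := by
    rw [Finset.sum_image]
    intro x hx y hy hxy
    rw [hs, Finset.mem_coe, Finset.mem_filter] at hx hy
    exact hinj x hx.1 y hy.1 hx.2 hy.2 (ZMod.val_injective c hxy)
  have e2 : (∑ β ∈ s.image (fun α => (φ α).val), F β)
      = ∑ β ∈ s.image (fun α => (φ α).val),
          (if IsUnit ((β : ZMod c)) then F β else 0) := by
    refine Finset.sum_congr rfl fun β hβ => ?_
    rw [if_pos (hmem β hβ).2]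
  rw [e1, e2]
  have hsub : s.image (fun α => (φ α).val) ⊆ Finset.range c :=
    fun β hβ => (hmem β hβ).1
  refine Finset.sum_le_sum_of_subset_of_nonneg hsub fun i _ _ => ?_
  split
  · exact hF i
  · exact le_refl 0

lemma inv_inj_of_unit {c : ℕ} {x y : ZMod c} (hx : IsUnit x) (hy : IsUnit y)
    (h : x⁻¹ = y⁻¹) : x = y := by
  have h1 : x * (x⁻¹ * y) = y := by
    rw [← mul_assoc, ZMod.mul_inv_of_unit x hx, one_mul]
  have h2 : x⁻¹ * y = 1 := by rw [h, ZMod.inv_mul_of_unit y hy]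
  rw [h2, mul_one] at h1
  exact h1

lemma isUnit_inv {c : ℕ} {x : ZMod c} (hx : IsUnit x) : IsUnit x⁻¹ :=
  IsUnit.of_mul_eq_one _ (ZMod.inv_mul_of_unit x hx)


lemma ρp_eq (x : ℝ) : ρp x = Real.exp x - 1 := by
  rw [ρp, Real.sinh_add_cosh]

lemma neg_ρm_neg (r : ℝ) : -ρm (-r) = ρp r := by
  simp only [ρp, ρm, Real.sinh_neg, Real.cosh_neg]
  ring

lemma exp_split (c q m n : ℕ) (r : ℝ) :
    Complex.exp (2 * Complex.I *
        ((Real.pi * (m : ℝ) / ((c : ℝ) * (q : ℝ)) : ℝ) * ((ρp r : ℝ) : ℂ)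
          - (Real.pi * (n : ℝ) / ((c : ℝ) * (q : ℝ)) : ℝ) * ((ρm r : ℝ) : ℂ)))
      = e ((m : ℝ) * ρp r / ((c : ℝ) * (q : ℝ))) * e ((n : ℝ) * (-ρm r) / ((c : ℝ) * (q : ℝ))) := by
  rw [e, e, ← Complex.exp_add]
  congr 1
  push_cast
  ring

lemma cov (L B : ℝ) (hL : 0 < L) (hL1 : L ≤ 1) (hB : 2 * L ≤ B) (H : ℝ → ℝ)
    (hH : Continuous H) (hH0 : ∀ t, 0 ≤ H t) :
    (∫ r in (-L)..L, H (ρp r)) ≤ 3 * ∫ t in (-B)..B, H t := by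
  have hexp3 : Real.exp 1 ≤ 3 := by have := Real.exp_one_lt_d9; linarith
  have hderiv : ∀ x ∈ Set.uIcc (-L) L, HasDerivAt ρp (Real.exp x) x := by
    intro x _
    have h1 : HasDerivAt (fun r : ℝ => Real.sinh r + Real.cosh r - 1)
        (Real.cosh x + Real.sinh x) x :=
      ((Real.hasDerivAt_sinh x).add (Real.hasDerivAt_cosh x)).sub_const 1
    have h2 : Real.cosh x + Real.sinh x = Real.exp x := Real.cosh_add_sinh x
    rw [h2] at h1
    exact h1
  have hcρ : Continuous fun r => H (ρp r) := hH.comp (by unfold ρp; continuity)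
  have step1 : (∫ r in (-L)..L, H (ρp r)) ≤ ∫ r in (-L)..L, 3 * (Real.exp r * H (ρp r)) := by
    refine intervalIntegral.integral_mono_on (by linarith) (hcρ.intervalIntegrable _ _)
      ((continuous_const.mul (Real.continuous_exp.mul hcρ)).intervalIntegrable _ _)
      fun x hx => ?_
    have hx1 : -1 ≤ x := by
      rcases hx with ⟨h1, _⟩; linarith
    have he1 : Real.exp (-1) ≤ Real.exp x := Real.exp_le_exp.mpr hx1
    have he2 : (1:ℝ)/3 ≤ Real.exp (-1) := by
      rw [Real.exp_neg]
      rw [div_le_iff₀ (by norm_num)]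
      rw [inv_mul_eq_div, le_div_iff₀ (Real.exp_pos 1)]
      linarith
    nlinarith [hH0 (ρp x), Real.exp_pos x]
  have step2 : (∫ r in (-L)..L, Real.exp r * H (ρp r)) = ∫ t in (ρp (-L))..(ρp L), H t := by
    have := intervalIntegral.integral_comp_smul_deriv hderiv
      Real.continuous_exp.continuousOn hH
    simpa [smul_eq_mul, Function.comp] using this
  have hmono : (∫ t in (ρp (-L))..(ρp L), H t) ≤ ∫ t in (-B)..(B), H t := by
    refine intervalIntegral.integral_mono_interval ?_ ?_ ?_
      (Filter.Eventually.of_forall fun x => hH0 x) (hH.intervalIntegrable _ _)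
    · rw [ρp_eq]
      have := Real.add_one_le_exp (-L)
      linarith
    · rw [ρp_eq, ρp_eq]
      have := Real.exp_le_exp.mpr (by linarith : (-L:ℝ) ≤ L)
      linarith
    · rw [ρp_eq]
      have := exp_chord hL.le hL1
      linarith
  calc (∫ r in (-L)..L, H (ρp r)) ≤ ∫ r in (-L)..L, 3 * (Real.exp r * H (ρp r)) := step1
    _ = 3 * ∫ r in (-L)..L, Real.exp r * H (ρp r) := intervalIntegral.integral_const_mul _ _
    _ = 3 * ∫ t in (ρp (-L))..(ρp L), H t := by rw [step2]
    _ ≤ 3 * ∫ t in (-B)..B, H t := by linarith [hmono]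

lemma refl_int (L : ℝ) (H : ℝ → ℝ) :
    (∫ r in (-L)..L, H (-ρm r)) = ∫ r in (-L)..L, H (ρp r) := by
  have key := intervalIntegral.integral_comp_neg (a := -L) (b := L) (fun x => H (-ρm x))
  simp only [neg_neg] at key
  rw [← key]
  refine intervalIntegral.integral_congr fun x _ => ?_
  rw [neg_ρm_neg]


lemma alg (a : ℕ → ℝ) (N1 N2 c q : ℕ) (r : ℝ) :
    (∑ m ∈ Finset.Ioc N1 N2, ∑ n ∈ Finset.Ioc N1 N2,
      (a m : ℂ) * (a n : ℂ) * Vsum (q : ℤ) (m : ℤ) (n : ℤ) c *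
        Complex.exp (2 * Complex.I *
          ((Real.pi * (m : ℝ) / ((c : ℝ) * (q : ℝ)) : ℝ) * ((ρp r : ℝ) : ℂ)
            - (Real.pi * (n : ℝ) / ((c : ℝ) * (q : ℝ)) : ℝ) * ((ρm r : ℝ) : ℂ))))
    = ∑ α ∈ Finset.range c,
        if IsUnit ((α : ZMod c)) ∧ IsUnit (((q : ℤ) : ZMod c) - (α : ZMod c)) then
          Af a N1 N2 c q ((α : ZMod c)⁻¹).val (ρp r) *
            Af a N1 N2 c q ((((q : ℤ) : ZMod c) - (α : ZMod c))⁻¹).val (-ρm r)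
        else 0 := by
  have key : ∀ m n : ℕ,
      (a m : ℂ) * (a n : ℂ) * Vsum (q : ℤ) (m : ℤ) (n : ℤ) c *
        Complex.exp (2 * Complex.I *
          ((Real.pi * (m : ℝ) / ((c : ℝ) * (q : ℝ)) : ℝ) * ((ρp r : ℝ) : ℂ)
            - (Real.pi * (n : ℝ) / ((c : ℝ) * (q : ℝ)) : ℝ) * ((ρm r : ℝ) : ℂ)))
      = ∑ α ∈ Finset.range c,
          if IsUnit ((α : ZMod c)) ∧ IsUnit (((q : ℤ) : ZMod c) - (α : ZMod c)) then
            ((a m : ℂ) * e ((((α : ZMod c)⁻¹).val : ℝ) * m / c)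
                * e ((m : ℝ) * ρp r / ((c : ℝ) * (q : ℝ))))
              * ((a n : ℂ) * e ((((((q : ℤ) : ZMod c) - (α : ZMod c))⁻¹).val : ℝ) * n / c)
                * e ((n : ℝ) * (-ρm r) / ((c : ℝ) * (q : ℝ))))
          else 0 := by
    intro m n
    rw [Vsum, Finset.mul_sum, Finset.sum_mul]
    refine Finset.sum_congr rfl fun α _ => ?_
    rw [mul_ite, mul_zero, ite_mul, zero_mul]
    split_ifs with h
    · rw [exp_split]
      have harg : (((((α : ZMod c)⁻¹).val : ℝ)) * (((m : ℤ) : ℤ) : ℝ)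
            + ((((((q : ℤ) : ZMod c) - (α : ZMod c))⁻¹).val : ℝ)) * (((n : ℤ) : ℤ) : ℝ)) / (c : ℝ)
          = (((α : ZMod c)⁻¹).val : ℝ) * m / c
            + (((((q : ℤ) : ZMod c) - (α : ZMod c))⁻¹).val : ℝ) * n / c := by
        push_cast
        ring
      rw [harg, e_add]
      ring
    · rfl
  calc (∑ m ∈ Finset.Ioc N1 N2, ∑ n ∈ Finset.Ioc N1 N2,
        (a m : ℂ) * (a n : ℂ) * Vsum (q : ℤ) (m : ℤ) (n : ℤ) c *
          Complex.exp (2 * Complex.I *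
            ((Real.pi * (m : ℝ) / ((c : ℝ) * (q : ℝ)) : ℝ) * ((ρp r : ℝ) : ℂ)
              - (Real.pi * (n : ℝ) / ((c : ℝ) * (q : ℝ)) : ℝ) * ((ρm r : ℝ) : ℂ))))
      = ∑ m ∈ Finset.Ioc N1 N2, ∑ n ∈ Finset.Ioc N1 N2, ∑ α ∈ Finset.range c,
          (if IsUnit ((α : ZMod c)) ∧ IsUnit (((q : ℤ) : ZMod c) - (α : ZMod c)) then
            ((a m : ℂ) * e ((((α : ZMod c)⁻¹).val : ℝ) * m / c)
                * e ((m : ℝ) * ρp r / ((c : ℝ) * (q : ℝ))))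
              * ((a n : ℂ) * e ((((((q : ℤ) : ZMod c) - (α : ZMod c))⁻¹).val : ℝ) * n / c)
                * e ((n : ℝ) * (-ρm r) / ((c : ℝ) * (q : ℝ))))
          else 0) :=
        Finset.sum_congr rfl fun m _ => Finset.sum_congr rfl fun n _ => key m n
    _ = ∑ m ∈ Finset.Ioc N1 N2, ∑ α ∈ Finset.range c, ∑ n ∈ Finset.Ioc N1 N2, _ :=
        Finset.sum_congr rfl fun m _ => Finset.sum_comm
    _ = ∑ α ∈ Finset.range c, ∑ m ∈ Finset.Ioc N1 N2, ∑ n ∈ Finset.Ioc N1 N2, _ :=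
        Finset.sum_comm
    _ = _ := by
        refine Finset.sum_congr rfl fun α _ => ?_
        by_cases h : IsUnit ((α : ZMod c)) ∧ IsUnit (((q : ℤ) : ZMod c) - (α : ZMod c))
        · simp only [if_pos h]
          rw [Af, Af, Finset.sum_mul_sum]
        · simp only [if_neg h, Finset.sum_const_zero]


lemma continuous_ρp : Continuous ρp := by unfold ρp; continuity

lemma continuous_ρm : Continuous ρm := by unfold ρm; continuity

lemma continuous_S (a : ℕ → ℝ) (N1 N2 c q : ℕ) :
    Continuous fun r : ℝ => (∑ α ∈ Finset.range c,
      if IsUnit ((α : ZMod c)) ∧ IsUnit (((q : ℤ) : ZMod c) - (α : ZMod c)) then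
        Af a N1 N2 c q ((α : ZMod c)⁻¹).val (ρp r) *
          Af a N1 N2 c q ((((q : ℤ) : ZMod c) - (α : ZMod c))⁻¹).val (-ρm r)
      else 0) := by
  refine continuous_finset_sum _ fun α _ => ?_
  by_cases h : IsUnit ((α : ZMod c)) ∧ IsUnit (((q : ℤ) : ZMod c) - (α : ZMod c))
  · simp only [if_pos h]
    exact ((continuous_Af a N1 N2 c q _).comp continuous_ρp).mul
      ((continuous_Af a N1 N2 c q _).comp continuous_ρm.neg)
  · simp only [if_neg h]
    exact continuous_const

lemma iker_expand (ε T M : ℝ) (a : ℕ → ℝ) (N1 N2 c q : ℕ) :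
    (∑ m ∈ Finset.Ioc N1 N2, ∑ n ∈ Finset.Ioc N1 N2,
        (a m : ℂ) * (a n : ℂ) * Vsum (q : ℤ) (m : ℤ) (n : ℤ) c / ((c : ℂ) * (q : ℂ))
          * Iker ε T M (Real.pi * m / (c * q)) (Real.pi * n / (c * q)))
    = (M : ℂ) * (T : ℂ) / ((c : ℂ) * (q : ℂ)) *
        ∫ r in (-(M ^ ε / M))..(M ^ ε / M),
          (gfun T M r : ℂ) * (∑ α ∈ Finset.range c,
            if IsUnit ((α : ZMod c)) ∧ IsUnit (((q : ℤ) : ZMod c) - (α : ZMod c)) then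
              Af a N1 N2 c q ((α : ZMod c)⁻¹).val (ρp r) *
                Af a N1 N2 c q ((((q : ℤ) : ZMod c) - (α : ZMod c))⁻¹).val (-ρm r)
            else 0) := by
  have hcont : ∀ (v w : ℝ), Continuous fun r : ℝ =>
      (gfun T M r : ℂ) * Complex.exp (2 * Complex.I *
        ((v : ℂ) * ((ρp r : ℝ) : ℂ) - (w : ℂ) * ((ρm r : ℝ) : ℂ))) := by
    intro v w
    refine (Complex.continuous_ofReal.comp (continuous_gfun T M)).mul ?_
    refine Complex.continuous_exp.comp (continuous_const.mul (Continuous.sub ?_ ?_))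
    · exact continuous_const.mul (Complex.continuous_ofReal.comp continuous_ρp)
    · exact continuous_const.mul (Complex.continuous_ofReal.comp continuous_ρm)
  simp only [Iker]
  calc (∑ m ∈ Finset.Ioc N1 N2, ∑ n ∈ Finset.Ioc N1 N2,
        (a m : ℂ) * (a n : ℂ) * Vsum (q : ℤ) (m : ℤ) (n : ℤ) c / ((c : ℂ) * (q : ℂ))
          * ((M : ℂ) * (T : ℂ) * ∫ r in (-(M ^ ε / M))..(M ^ ε / M),
              (gfun T M r : ℂ) * Complex.exp (2 * Complex.I *
                (((Real.pi * (m : ℝ) / ((c : ℝ) * (q : ℝ)) : ℝ) : ℂ) * ((ρp r : ℝ) : ℂ)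
                  - ((Real.pi * (n : ℝ) / ((c : ℝ) * (q : ℝ)) : ℝ) : ℂ) * ((ρm r : ℝ) : ℂ)))))
      = ∑ m ∈ Finset.Ioc N1 N2, ∑ n ∈ Finset.Ioc N1 N2,
          ((M : ℂ) * (T : ℂ) / ((c : ℂ) * (q : ℂ)) *
            ∫ r in (-(M ^ ε / M))..(M ^ ε / M),
              (a m : ℂ) * (a n : ℂ) * Vsum (q : ℤ) (m : ℤ) (n : ℤ) c *
                ((gfun T M r : ℂ) * Complex.exp (2 * Complex.I *
                  (((Real.pi * (m : ℝ) / ((c : ℝ) * (q : ℝ)) : ℝ) : ℂ) * ((ρp r : ℝ) : ℂ)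
                    - ((Real.pi * (n : ℝ) / ((c : ℝ) * (q : ℝ)) : ℝ) : ℂ) * ((ρm r : ℝ) : ℂ))))) := by
        refine Finset.sum_congr rfl fun m _ => Finset.sum_congr rfl fun n _ => ?_
        rw [intervalIntegral.integral_const_mul]
        ring
    _ = (M : ℂ) * (T : ℂ) / ((c : ℂ) * (q : ℂ)) *
          ∑ m ∈ Finset.Ioc N1 N2, ∑ n ∈ Finset.Ioc N1 N2,
            ∫ r in (-(M ^ ε / M))..(M ^ ε / M),
              (a m : ℂ) * (a n : ℂ) * Vsum (q : ℤ) (m : ℤ) (n : ℤ) c *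
                ((gfun T M r : ℂ) * Complex.exp (2 * Complex.I *
                  (((Real.pi * (m : ℝ) / ((c : ℝ) * (q : ℝ)) : ℝ) : ℂ) * ((ρp r : ℝ) : ℂ)
                    - ((Real.pi * (n : ℝ) / ((c : ℝ) * (q : ℝ)) : ℝ) : ℂ) * ((ρm r : ℝ) : ℂ)))) := by
        simp only [Finset.mul_sum]
    _ = (M : ℂ) * (T : ℂ) / ((c : ℂ) * (q : ℂ)) *
          ∫ r in (-(M ^ ε / M))..(M ^ ε / M),
            ∑ m ∈ Finset.Ioc N1 N2, ∑ n ∈ Finset.Ioc N1 N2,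
              (a m : ℂ) * (a n : ℂ) * Vsum (q : ℤ) (m : ℤ) (n : ℤ) c *
                ((gfun T M r : ℂ) * Complex.exp (2 * Complex.I *
                  (((Real.pi * (m : ℝ) / ((c : ℝ) * (q : ℝ)) : ℝ) : ℂ) * ((ρp r : ℝ) : ℂ)
                    - ((Real.pi * (n : ℝ) / ((c : ℝ) * (q : ℝ)) : ℝ) : ℂ) * ((ρm r : ℝ) : ℂ)))) := by
        congr 1
        rw [intervalIntegral.integral_finset_sum]
        · refine Finset.sum_congr rfl fun m _ => ?_
          rw [intervalIntegral.integral_finset_sum]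
          intro n _
          exact (continuous_const.mul (hcont _ _)).intervalIntegrable _ _
        · intro m _
          exact (continuous_finset_sum _ fun n _ =>
            (continuous_const.mul (hcont _ _))).intervalIntegrable _ _
    _ = _ := by
        congr 1
        refine intervalIntegral.integral_congr fun r _ => ?_
        have expand : (∑ m ∈ Finset.Ioc N1 N2, ∑ n ∈ Finset.Ioc N1 N2,
            (a m : ℂ) * (a n : ℂ) * Vsum (q : ℤ) (m : ℤ) (n : ℤ) c *
              ((gfun T M r : ℂ) * Complex.exp (2 * Complex.I *
                (((Real.pi * (m : ℝ) / ((c : ℝ) * (q : ℝ)) : ℝ) : ℂ) * ((ρp r : ℝ) : ℂ)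
                  - ((Real.pi * (n : ℝ) / ((c : ℝ) * (q : ℝ)) : ℝ) : ℂ) * ((ρm r : ℝ) : ℂ)))))
            = (gfun T M r : ℂ) * ∑ m ∈ Finset.Ioc N1 N2, ∑ n ∈ Finset.Ioc N1 N2,
                (a m : ℂ) * (a n : ℂ) * Vsum (q : ℤ) (m : ℤ) (n : ℤ) c *
                  Complex.exp (2 * Complex.I *
                    (((Real.pi * (m : ℝ) / ((c : ℝ) * (q : ℝ)) : ℝ) : ℂ) * ((ρp r : ℝ) : ℂ)
                      - ((Real.pi * (n : ℝ) / ((c : ℝ) * (q : ℝ)) : ℝ) : ℂ) * ((ρm r : ℝ) : ℂ))) := by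
          rw [Finset.mul_sum]
          refine Finset.sum_congr rfl fun m _ => ?_
          rw [Finset.mul_sum]
          exact Finset.sum_congr rfl fun n _ => by ring
        rw [expand, alg]


lemma S_norm_le (a : ℕ → ℝ) (N1 N2 c q : ℕ) (hc : c ≠ 0) (r : ℝ) :
    ‖(∑ α ∈ Finset.range c,
      if IsUnit ((α : ZMod c)) ∧ IsUnit (((q : ℤ) : ZMod c) - (α : ZMod c)) then
        Af a N1 N2 c q ((α : ZMod c)⁻¹).val (ρp r) *
          Af a N1 N2 c q ((((q : ℤ) : ZMod c) - (α : ZMod c))⁻¹).val (-ρm r)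
      else 0)‖
    ≤ (Hf a N1 N2 c q (ρp r) + Hf a N1 N2 c q (-ρm r)) / 2 := by
  calc ‖(∑ α ∈ Finset.range c,
      if IsUnit ((α : ZMod c)) ∧ IsUnit (((q : ℤ) : ZMod c) - (α : ZMod c)) then
        Af a N1 N2 c q ((α : ZMod c)⁻¹).val (ρp r) *
          Af a N1 N2 c q ((((q : ℤ) : ZMod c) - (α : ZMod c))⁻¹).val (-ρm r)
      else 0)‖
      ≤ ∑ α ∈ Finset.range c,
          (if IsUnit ((α : ZMod c)) ∧ IsUnit (((q : ℤ) : ZMod c) - (α : ZMod c)) then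
            ‖Af a N1 N2 c q ((α : ZMod c)⁻¹).val (ρp r)‖ ^ 2 / 2
              + ‖Af a N1 N2 c q ((((q : ℤ) : ZMod c) - (α : ZMod c))⁻¹).val (-ρm r)‖ ^ 2 / 2
          else 0) := by
        refine (norm_sum_le _ _).trans (Finset.sum_le_sum fun α _ => ?_)
        split_ifs with h
        · rw [norm_mul]
          nlinarith [sq_nonneg (‖Af a N1 N2 c q ((α : ZMod c)⁻¹).val (ρp r)‖
              - ‖Af a N1 N2 c q ((((q : ℤ) : ZMod c) - (α : ZMod c))⁻¹).val (-ρm r)‖),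
            norm_nonneg (Af a N1 N2 c q ((α : ZMod c)⁻¹).val (ρp r)),
            norm_nonneg (Af a N1 N2 c q ((((q : ℤ) : ZMod c) - (α : ZMod c))⁻¹).val (-ρm r))]
        · simp
    _ = (∑ α ∈ Finset.range c,
          (if IsUnit ((α : ZMod c)) ∧ IsUnit (((q : ℤ) : ZMod c) - (α : ZMod c)) then
            ‖Af a N1 N2 c q ((α : ZMod c)⁻¹).val (ρp r)‖ ^ 2 else 0)) / 2
        + (∑ α ∈ Finset.range c,
          (if IsUnit ((α : ZMod c)) ∧ IsUnit (((q : ℤ) : ZMod c) - (α : ZMod c)) then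
            ‖Af a N1 N2 c q ((((q : ℤ) : ZMod c) - (α : ZMod c))⁻¹).val (-ρm r)‖ ^ 2 else 0)) / 2 := by
        rw [Finset.sum_div, Finset.sum_div, ← Finset.sum_add_distrib]
        refine Finset.sum_congr rfl fun α _ => ?_
        split_ifs with h
        · ring
        · simp
    _ ≤ Hf a N1 N2 c q (ρp r) / 2 + Hf a N1 N2 c q (-ρm r) / 2 := by
        have h1 := sum_reindex_le c hc
          (fun α => IsUnit ((α : ZMod c)) ∧ IsUnit (((q : ℤ) : ZMod c) - (α : ZMod c)))
          (fun α => ((α : ZMod c))⁻¹)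
          (fun α hα α' hα' hP hP' heq => by
            have h2 : ((α : ZMod c)) = ((α' : ZMod c)) :=
              inv_inj_of_unit hP.1 hP'.1 heq
            have h3 := ZMod.val_cast_of_lt (Finset.mem_range.mp hα)
            have h4 := ZMod.val_cast_of_lt (Finset.mem_range.mp hα')
            rw [← h3, ← h4, h2])
          (fun α _ hP => isUnit_inv hP.1)
          (fun β => ‖Af a N1 N2 c q β (ρp r)‖ ^ 2) (fun β => by positivity)
        have h2 := sum_reindex_le c hc
          (fun α => IsUnit ((α : ZMod c)) ∧ IsUnit (((q : ℤ) : ZMod c) - (α : ZMod c)))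
          (fun α => (((q : ℤ) : ZMod c) - (α : ZMod c))⁻¹)
          (fun α hα α' hα' hP hP' heq => by
            have h2 : ((α : ZMod c)) = ((α' : ZMod c)) := by
              have := inv_inj_of_unit hP.2 hP'.2 heq
              exact sub_right_inj.mp this
            have h3 := ZMod.val_cast_of_lt (Finset.mem_range.mp hα)
            have h4 := ZMod.val_cast_of_lt (Finset.mem_range.mp hα')
            rw [← h3, ← h4, h2])
          (fun α _ hP => isUnit_inv hP.2)
          (fun β => ‖Af a N1 N2 c q β (-ρm r)‖ ^ 2) (fun β => by positivity)
        rw [Hf, Hf]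
        refine add_le_add ((div_le_div_iff_of_pos_right (by norm_num : (0:ℝ) < 2)).mpr ?_)
          ((div_le_div_iff_of_pos_right (by norm_num : (0:ℝ) < 2)).mpr ?_)
        · simpa using h1
        · simpa using h2
    _ = (Hf a N1 N2 c q (ρp r) + Hf a N1 N2 c q (-ρm r)) / 2 := by ring


lemma norm_bound (ε T M : ℝ) (hT : 0 < T) (hM0 : 0 < M) (hMT : M ≤ T)
    (hL0 : 0 < M ^ ε / M) (hL1 : M ^ ε / M ≤ 1)
    (B : ℝ) (hB : 2 * (M ^ ε / M) ≤ B)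
    (a : ℕ → ℝ) (N1 N2 c q : ℕ) (hc : c ≠ 0) :
    ‖(∑ m ∈ Finset.Ioc N1 N2, ∑ n ∈ Finset.Ioc N1 N2,
        (a m : ℂ) * (a n : ℂ) * Vsum (q : ℤ) (m : ℤ) (n : ℤ) c / ((c : ℂ) * (q : ℂ))
          * Iker ε T M (Real.pi * m / (c * q)) (Real.pi * n / (c * q)))‖
      ≤ M * T / ((c : ℝ) * (q : ℝ)) * (6 * ∫ t in (-B)..B, Hf a N1 N2 c q t) := by
  rw [iker_expand]
  set L := M ^ ε / M with hLdef
  have hLL : -L ≤ L := by linarith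
  have hSc := continuous_S a N1 N2 c q
  have hHc := continuous_Hf a N1 N2 c q
  have hH0 := Hf_nonneg a N1 N2 c q
  have hgc : Continuous fun r : ℝ => ((gfun T M r : ℝ) : ℂ) :=
    Complex.continuous_ofReal.comp (continuous_gfun T M)
  -- norm of the constant factor
  have hk : ‖(M : ℂ) * (T : ℂ) / ((c : ℂ) * (q : ℂ))‖ = M * T / ((c : ℝ) * (q : ℝ)) := by
    have h1 : (M : ℂ) * (T : ℂ) / ((c : ℂ) * (q : ℂ))
        = ((M * T / ((c : ℝ) * (q : ℝ)) : ℝ) : ℂ) := by push_cast; ring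
    rw [h1, Complex.norm_real]
    exact abs_of_nonneg (by positivity)
  rw [norm_mul, hk]
  have hbound : ‖∫ r in (-L)..L, (gfun T M r : ℂ) * (∑ α ∈ Finset.range c,
      if IsUnit ((α : ZMod c)) ∧ IsUnit (((q : ℤ) : ZMod c) - (α : ZMod c)) then
        Af a N1 N2 c q ((α : ZMod c)⁻¹).val (ρp r) *
          Af a N1 N2 c q ((((q : ℤ) : ZMod c) - (α : ZMod c))⁻¹).val (-ρm r)
      else 0)‖ ≤ 6 * ∫ t in (-B)..B, Hf a N1 N2 c q t := by
    have step1 := intervalIntegral.norm_integral_le_integral_norm (μ := volume) hLL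
      (f := fun r => (gfun T M r : ℂ) * (∑ α ∈ Finset.range c,
        if IsUnit ((α : ZMod c)) ∧ IsUnit (((q : ℤ) : ZMod c) - (α : ZMod c)) then
          Af a N1 N2 c q ((α : ZMod c)⁻¹).val (ρp r) *
            Af a N1 N2 c q ((((q : ℤ) : ZMod c) - (α : ZMod c))⁻¹).val (-ρm r)
        else 0))
    have step2 : (∫ r in (-L)..L, ‖(gfun T M r : ℂ) * (∑ α ∈ Finset.range c,
        if IsUnit ((α : ZMod c)) ∧ IsUnit (((q : ℤ) : ZMod c) - (α : ZMod c)) then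
          Af a N1 N2 c q ((α : ZMod c)⁻¹).val (ρp r) *
            Af a N1 N2 c q ((((q : ℤ) : ZMod c) - (α : ZMod c))⁻¹).val (-ρm r)
        else 0)‖)
        ≤ ∫ r in (-L)..L, (Hf a N1 N2 c q (ρp r) + Hf a N1 N2 c q (-ρm r)) := by
      refine intervalIntegral.integral_mono_on hLL
        ((hgc.mul hSc).norm.intervalIntegrable _ _)
        (((hHc.comp continuous_ρp).add (hHc.comp continuous_ρm.neg)).intervalIntegrable _ _)
        fun x hx => ?_
      rw [norm_mul, Complex.norm_real, Real.norm_eq_abs]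
      have h1 := S_norm_le a N1 N2 c q hc x
      have h2 := abs_gfun_le T M hT hM0.le hMT x
      have h3 := norm_nonneg ((∑ α ∈ Finset.range c,
        if IsUnit ((α : ZMod c)) ∧ IsUnit (((q : ℤ) : ZMod c) - (α : ZMod c)) then
          Af a N1 N2 c q ((α : ZMod c)⁻¹).val (ρp x) *
            Af a N1 N2 c q ((((q : ℤ) : ZMod c) - (α : ZMod c))⁻¹).val (-ρm x)
        else 0))
      have h4 := abs_nonneg (gfun T M x)
      nlinarith
    have step3 : (∫ r in (-L)..L, (Hf a N1 N2 c q (ρp r) + Hf a N1 N2 c q (-ρm r)))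
        = (∫ r in (-L)..L, Hf a N1 N2 c q (ρp r))
          + ∫ r in (-L)..L, Hf a N1 N2 c q (-ρm r) :=
      intervalIntegral.integral_add
        ((hHc.comp continuous_ρp).intervalIntegrable _ _)
        ((hHc.comp continuous_ρm.neg).intervalIntegrable _ _)
    have step4 : (∫ r in (-L)..L, Hf a N1 N2 c q (-ρm r))
        = ∫ r in (-L)..L, Hf a N1 N2 c q (ρp r) := refl_int L _
    have step5 : (∫ r in (-L)..L, Hf a N1 N2 c q (ρp r))
        ≤ 3 * ∫ t in (-B)..B, Hf a N1 N2 c q t :=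
      cov L B hL0 hL1 hB _ hHc hH0
    calc ‖_‖ ≤ _ := step1
      _ ≤ _ := step2
      _ = _ := step3
      _ ≤ 6 * ∫ t in (-B)..B, Hf a N1 N2 c q t := by rw [step4]; linarith
  have hk0 : (0:ℝ) ≤ M * T / ((c : ℝ) * (q : ℝ)) := by positivity
  exact mul_le_mul_of_nonneg_left hbound hk0


/-- The off-diagonal term
`P_♮ = Re ∑_{cq ≤ KN/T} ∑∑_{N<m,n≤2N} a_m a_n V_q(m,n;c)/(cq) · I(πm/(cq), πn/(cq))`
is bounded by
`C·MT ∑_{q ≤ KN/T} (1/q) ∫ ∑_{c ≤ KN/(Tq)} (1/c) ∑*_{α mod c}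
  |∑_n a_n e(αn/c) e(nt/(cq))|² dt`. -/
theorem offdiagonal_bound (ε : ℝ) (hε : ε ∈ Set.Ioo (0 : ℝ) (1 / 2)) (K : ℝ) (hK : 0 < K) :
    ∃ C : ℝ, ∀ T M : ℝ, 2 ≤ T → T ^ ε ≤ M → M ≤ T ^ (1 - ε) →
      ∀ N : ℝ, 1 ≤ N → ∀ a : ℕ → ℝ,
      (∀ n : ℕ, a n ≠ 0 → (N < n ∧ (n : ℝ) ≤ 2 * N)) →
      |(∑ c ∈ Finset.Icc 1 ⌊K * N / T⌋₊, ∑ q ∈ Finset.Icc 1 ⌊K * N / T⌋₊,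
          if ((c * q : ℕ) : ℝ) ≤ K * N / T then
            ∑ m ∈ Finset.Ioc ⌊N⌋₊ ⌊2 * N⌋₊, ∑ n ∈ Finset.Ioc ⌊N⌋₊ ⌊2 * N⌋₊,
              (a m : ℂ) * (a n : ℂ) * Vsum (q : ℤ) (m : ℤ) (n : ℤ) c / ((c : ℂ) * (q : ℂ))
                * Iker ε T M (Real.pi * m / (c * q)) (Real.pi * n / (c * q))
          else 0).re|
        ≤ C * (M * T) * ∑ q ∈ Finset.Icc 1 ⌊K * N / T⌋₊, (1 / (q : ℝ)) *
            ∫ t in (-(2 * M ^ ε / M))..(2 * M ^ ε / M),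
              ∑ c ∈ Finset.Icc 1 ⌊K * N / (T * q)⌋₊, (1 / (c : ℝ)) *
                ∑ α ∈ Finset.range c,
                  if IsUnit (α : ZMod c) then
                    ‖∑ n ∈ Finset.Ioc ⌊N⌋₊ ⌊2 * N⌋₊,
                      (a n : ℂ) * e ((α : ℝ) * n / c) * e ((n : ℝ) * t / (c * q))‖ ^ 2
                  else 0 := by
  obtain ⟨hε0, hε2⟩ := hε
  refine ⟨6, ?_⟩
  intro T M hT hTM hMT N hN a ha
  have hT0 : (0:ℝ) < T := by linarith
  have hT1 : (1:ℝ) ≤ T := by linarith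
  have hTε1 : (1:ℝ) ≤ T ^ ε := by
    simpa [Real.rpow_zero] using
      Real.rpow_le_rpow_of_exponent_le hT1 (le_of_lt hε0 : (0:ℝ) ≤ ε)
  have hM1 : (1:ℝ) ≤ M := le_trans hTε1 hTM
  have hM0 : (0:ℝ) < M := by linarith
  have hMT' : M ≤ T := by
    have h1 : T ^ (1 - ε) ≤ T ^ (1:ℝ) :=
      Real.rpow_le_rpow_of_exponent_le hT1 (by linarith)
    rw [Real.rpow_one] at h1
    linarith
  set N1 := ⌊N⌋₊ with hN1
  set N2 := ⌊2*N⌋₊ with hN2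
  set Q := ⌊K * N / T⌋₊ with hQ
  set L := M ^ ε / M with hL
  have hL0 : 0 < L := div_pos (Real.rpow_pos_of_pos hM0 ε) hM0
  have hL1 : L ≤ 1 := by
    rw [hL, div_le_one hM0]
    simpa [Real.rpow_one] using
      Real.rpow_le_rpow_of_exponent_le hM1 (by linarith : ε ≤ (1:ℝ))
  set B := 2 * M ^ ε / M with hBdef
  have hB : 2 * L ≤ B := le_of_eq (by rw [hL, hBdef, mul_div_assoc])
  have hB0 : 0 ≤ B := by
    have : (0:ℝ) < M ^ ε := Real.rpow_pos_of_pos hM0 ε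
    positivity
  have hBB : -B ≤ B := by linarith
  have hIntHf : ∀ c q : ℕ, 0 ≤ ∫ t in (-B)..B, Hf a N1 N2 c q t := fun c q =>
    intervalIntegral.integral_nonneg hBB fun u _ => Hf_nonneg a N1 N2 c q u
  show |(∑ c ∈ Finset.Icc 1 Q, ∑ q ∈ Finset.Icc 1 Q,
          if ((c * q : ℕ) : ℝ) ≤ K * N / T then
            ∑ m ∈ Finset.Ioc N1 N2, ∑ n ∈ Finset.Ioc N1 N2,
              (a m : ℂ) * (a n : ℂ) * Vsum (q : ℤ) (m : ℤ) (n : ℤ) c / ((c : ℂ) * (q : ℂ))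
                * Iker ε T M (Real.pi * m / (c * q)) (Real.pi * n / (c * q))
          else 0).re|
      ≤ 6 * (M * T) * ∑ q ∈ Finset.Icc 1 Q, (1 / (q : ℝ)) *
          ∫ t in (-B)..B, ∑ c ∈ Finset.Icc 1 ⌊K * N / (T * q)⌋₊,
            (1 / (c : ℝ)) * Hf a N1 N2 c q t
  calc |(∑ c ∈ Finset.Icc 1 Q, ∑ q ∈ Finset.Icc 1 Q,
          if ((c * q : ℕ) : ℝ) ≤ K * N / T then
            ∑ m ∈ Finset.Ioc N1 N2, ∑ n ∈ Finset.Ioc N1 N2,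
              (a m : ℂ) * (a n : ℂ) * Vsum (q : ℤ) (m : ℤ) (n : ℤ) c / ((c : ℂ) * (q : ℂ))
                * Iker ε T M (Real.pi * m / (c * q)) (Real.pi * n / (c * q))
          else 0).re|
      ≤ ‖(∑ c ∈ Finset.Icc 1 Q, ∑ q ∈ Finset.Icc 1 Q,
          if ((c * q : ℕ) : ℝ) ≤ K * N / T then
            ∑ m ∈ Finset.Ioc N1 N2, ∑ n ∈ Finset.Ioc N1 N2,
              (a m : ℂ) * (a n : ℂ) * Vsum (q : ℤ) (m : ℤ) (n : ℤ) c / ((c : ℂ) * (q : ℂ))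
                * Iker ε T M (Real.pi * m / (c * q)) (Real.pi * n / (c * q))
          else 0)‖ := by
        exact Complex.abs_re_le_norm _
    _ ≤ ∑ c ∈ Finset.Icc 1 Q, ∑ q ∈ Finset.Icc 1 Q,
          ‖if ((c * q : ℕ) : ℝ) ≤ K * N / T then
            ∑ m ∈ Finset.Ioc N1 N2, ∑ n ∈ Finset.Ioc N1 N2,
              (a m : ℂ) * (a n : ℂ) * Vsum (q : ℤ) (m : ℤ) (n : ℤ) c / ((c : ℂ) * (q : ℂ))
                * Iker ε T M (Real.pi * m / (c * q)) (Real.pi * n / (c * q))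
          else 0‖ :=
        (norm_sum_le _ _).trans (Finset.sum_le_sum fun c _ => norm_sum_le _ _)
    _ ≤ ∑ c ∈ Finset.Icc 1 Q, ∑ q ∈ Finset.Icc 1 Q,
          (if ((c * q : ℕ) : ℝ) ≤ K * N / T then
            M * T / ((c : ℝ) * (q : ℝ)) * (6 * ∫ t in (-B)..B, Hf a N1 N2 c q t)
          else 0) := by
        refine Finset.sum_le_sum fun c hc => Finset.sum_le_sum fun q hq => ?_
        have hc1 : 1 ≤ c := (Finset.mem_Icc.mp hc).1
        split_ifs with h
        · exact norm_bound ε T M hT0 hM0 hMT' hL0 hL1 B hB a N1 N2 c q (by omega)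
        · simp
    _ = ∑ q ∈ Finset.Icc 1 Q, ∑ c ∈ Finset.Icc 1 Q,
          (if ((c * q : ℕ) : ℝ) ≤ K * N / T then
            M * T / ((c : ℝ) * (q : ℝ)) * (6 * ∫ t in (-B)..B, Hf a N1 N2 c q t)
          else 0) := Finset.sum_comm
    _ ≤ ∑ q ∈ Finset.Icc 1 Q,
          (6 * (M * T) * ((1 / (q : ℝ)) *
            ∫ t in (-B)..B, ∑ c ∈ Finset.Icc 1 ⌊K * N / (T * q)⌋₊,
              (1 / (c : ℝ)) * Hf a N1 N2 c q t)) := by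
        refine Finset.sum_le_sum fun q hq => ?_
        have hq1 : 1 ≤ q := (Finset.mem_Icc.mp hq).1
        have hqR : (1:ℝ) ≤ (q : ℝ) := by exact_mod_cast hq1
        have hq0 : (0:ℝ) < (q : ℝ) := by linarith
        calc (∑ c ∈ Finset.Icc 1 Q,
              if ((c * q : ℕ) : ℝ) ≤ K * N / T then
                M * T / ((c : ℝ) * (q : ℝ)) * (6 * ∫ t in (-B)..B, Hf a N1 N2 c q t)
              else 0)
            = ∑ c ∈ (Finset.Icc 1 Q).filter (fun c => ((c * q : ℕ) : ℝ) ≤ K * N / T),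
                M * T / ((c : ℝ) * (q : ℝ)) * (6 * ∫ t in (-B)..B, Hf a N1 N2 c q t) :=
              (Finset.sum_filter _ _).symm
          _ ≤ ∑ c ∈ Finset.Icc 1 ⌊K * N / (T * q)⌋₊,
                M * T / ((c : ℝ) * (q : ℝ)) * (6 * ∫ t in (-B)..B, Hf a N1 N2 c q t) := by
              refine Finset.sum_le_sum_of_subset_of_nonneg ?_ fun i _ _ =>
                mul_nonneg (by positivity)
                  (mul_nonneg (by norm_num) (hIntHf i q))
              intro x hx
              rw [Finset.mem_filter, Finset.mem_Icc] at hx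
              obtain ⟨⟨hx1, _⟩, hx3⟩ := hx
              rw [Finset.mem_Icc]
              refine ⟨hx1, Nat.le_floor ?_⟩
              push_cast at hx3 ⊢
              rw [← div_div, le_div_iff₀ hq0]
              exact hx3
          _ = 6 * (M * T) * ((1 / (q : ℝ)) *
                ∑ c ∈ Finset.Icc 1 ⌊K * N / (T * q)⌋₊,
                  (1 / (c : ℝ)) * ∫ t in (-B)..B, Hf a N1 N2 c q t) := by
              rw [Finset.mul_sum, Finset.mul_sum]
              exact Finset.sum_congr rfl fun c _ => by ring
          _ = 6 * (M * T) * ((1 / (q : ℝ)) *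
                ∫ t in (-B)..B, ∑ c ∈ Finset.Icc 1 ⌊K * N / (T * q)⌋₊,
                  (1 / (c : ℝ)) * Hf a N1 N2 c q t) := by
              congr 1
              congr 1
              rw [intervalIntegral.integral_finset_sum
                (fun c _ => (continuous_const.fun_mul (continuous_Hf a N1 N2 c q)).intervalIntegrable _ _)]
              exact Finset.sum_congr rfl fun c _ =>
                (intervalIntegral.integral_const_mul _ _).symm
    _ = 6 * (M * T) * ∑ q ∈ Finset.Icc 1 Q, (1 / (q : ℝ)) *
          ∫ t in (-B)..B, ∑ c ∈ Finset.Icc 1 ⌊K * N / (T * q)⌋₊,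
            (1 / (c : ℝ)) * Hf a N1 N2 c q t := by
        rw [Finset.mul_sum]
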